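/- Let X be a compact ultrametric space, p ∈ (1,∞), and α ∈ (1/p, 1]. Then every α-Hölder arc in W_p(X) is constant: if γ : [0,1] → P(X) satisfies W_p(γ(s), γ(t)) ≤ K·|s − t|^α for some constant K ≥ 0 and all s, t ∈ [0,1], then γ(s) = γ(t) for all s, t ∈ [0,1]. -/

import Mathlib

open MeasureTheory
open scoped ENNReal NNReal

/-- A coupling of `μ` and `ν`. -/
def IsCoupling {X : Type*} [MeasurableSpace X] (π : Measure (X × X)) (μ ν : Measure X) : Prop :=
  IsProbabilityMeasure π ∧ π.map Prod.fst = μ ∧ π.map Prod.snd = ν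

/-- The `L^p` Wasserstein distance between two (probability) measures. -/
noncomputable def Wp {X : Type*} [MetricSpace X] [MeasurableSpace X] (p : ℝ)
    (μ ν : Measure X) : ℝ :=
  sInf {c : ℝ | ∃ π : Measure (X × X), IsCoupling π μ ν ∧
      c = ∫ ab, dist ab.1 ab.2 ^ p ∂π} ^ (1 / p)

lemma prod_isCoupling {X : Type*} [MeasurableSpace X] (μ ν : Measure X)
    [IsProbabilityMeasure μ] [IsProbabilityMeasure ν] : IsCoupling (μ.prod ν) μ ν := by
  refine ⟨inferInstance, ?_, ?_⟩
  · rw [Measure.map_fst_prod]; simp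
  · rw [Measure.map_snd_prod]; simp

lemma ultra_ball_subset {X : Type*} [MetricSpace X]
    (hX : ∀ x y z : X, dist x z ≤ max (dist x y) (dist y z))
    {x1 x2 : X} {r1 r2 : ℝ} (h12 : r1 ≤ r2)
    (hne : (Metric.closedBall x1 r1 ∩ Metric.closedBall x2 r2).Nonempty) :
    Metric.closedBall x1 r1 ⊆ Metric.closedBall x2 r2 := by
  obtain ⟨z, hz1, hz2⟩ := hne
  intro w hw
  rw [Metric.mem_closedBall] at *
  have h1 : dist w x2 ≤ max (dist w z) (dist z x2) := hX w z x2
  have h2 : dist w z ≤ max (dist w x1) (dist x1 z) := hX w x1 z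
  rw [dist_comm x1 z] at h2
  exact h1.trans (max_le (h2.trans (max_le (hw.trans h12) (hz1.trans h12))) hz2)

lemma ultra_generateFrom {X : Type*} [MetricSpace X] [CompactSpace X]
    [MeasurableSpace X] [BorelSpace X]
    (hX : ∀ x y z : X, dist x z ≤ max (dist x y) (dist y z)) :
    ‹MeasurableSpace X› =
      MeasurableSpace.generateFrom {A : Set X | ∃ x r, 0 < r ∧ A = Metric.closedBall x r} := by
  have hopen : ∀ A ∈ {A : Set X | ∃ x r, 0 < r ∧ A = Metric.closedBall x r}, IsOpen A := by
    rintro A ⟨x, r, hr, rfl⟩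
    rw [Metric.isOpen_iff]
    intro y hy
    refine ⟨r, hr, fun z hz => ?_⟩
    rw [Metric.mem_ball] at hz
    rw [Metric.mem_closedBall] at *
    have h1 : dist z x ≤ max (dist z y) (dist y x) := hX z y x
    exact h1.trans (max_le hz.le hy)
  have hnhds : ∀ (a : X) (U : Set X), a ∈ U → IsOpen U →
      ∃ v ∈ {A : Set X | ∃ x r, 0 < r ∧ A = Metric.closedBall x r}, a ∈ v ∧ v ⊆ U := by
    intro a U ha hU
    obtain ⟨ε, hε, hball⟩ := Metric.isOpen_iff.mp hU a ha
    refine ⟨Metric.closedBall a (ε / 2), ⟨a, ε / 2, half_pos hε, rfl⟩,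
      Metric.mem_closedBall_self (half_pos hε).le,
      (Metric.closedBall_subset_ball (by linarith)).trans hball⟩
  have hbasis := TopologicalSpace.isTopologicalBasis_of_isOpen_of_nhds hopen hnhds
  rw [BorelSpace.measurable_eq (α := X)]
  exact hbasis.borel_eq_generateFrom

lemma ultra_piSystem {X : Type*} [MetricSpace X]
    (hX : ∀ x y z : X, dist x z ≤ max (dist x y) (dist y z)) :
    IsPiSystem {A : Set X | ∃ x r, 0 < r ∧ A = Metric.closedBall x r} := by
  rintro A ⟨x1, r1, hr1, rfl⟩ B ⟨x2, r2, hr2, rfl⟩ hne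
  rcases le_total r1 r2 with h | h
  · have := ultra_ball_subset hX h hne
    have heq : Metric.closedBall x1 r1 ∩ Metric.closedBall x2 r2 = Metric.closedBall x1 r1 :=
      Set.inter_eq_left.mpr this
    rw [heq]; exact ⟨x1, r1, hr1, rfl⟩
  · rw [Set.inter_comm] at hne ⊢
    have := ultra_ball_subset hX h hne
    have heq : Metric.closedBall x2 r2 ∩ Metric.closedBall x1 r1 = Metric.closedBall x2 r2 :=
      Set.inter_eq_left.mpr this
    rw [heq]; exact ⟨x2, r2, hr2, rfl⟩

lemma holder_gt_one_const (f : unitInterval → ℝ) (C β : ℝ) (hβ : 1 < β) (hC : 0 ≤ C)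
    (h : ∀ s t : unitInterval, |f s - f t| ≤ C * |(s : ℝ) - (t : ℝ)| ^ β)
    (s t : unitInterval) : f s = f t := by
  have hq0 : (0:ℝ) < (2:ℝ) ^ (1 - β) := Real.rpow_pos_of_pos two_pos _
  have hq1 : (2:ℝ) ^ (1 - β) < 1 :=
    Real.rpow_lt_one_of_one_lt_of_neg one_lt_two (by linarith)
  have key : ∀ n : ℕ, ∀ s t : unitInterval,
      |f s - f t| ≤ C * |(s : ℝ) - (t : ℝ)| ^ β * ((2:ℝ) ^ (1 - β)) ^ n := by
    intro n
    induction n with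
    | zero => simpa using h
    | succ n ih =>
      intro s t
      have hm1 : (0:ℝ) ≤ ((s:ℝ) + t) / 2 := by
        have := s.2.1; have := t.2.1; linarith
      have hm2 : ((s:ℝ) + t) / 2 ≤ 1 := by
        have := s.2.2; have := t.2.2; linarith
      set m : unitInterval := ⟨((s:ℝ) + t) / 2, hm1, hm2⟩ with hm
      have e1 : (s:ℝ) - (m:ℝ) = ((s:ℝ) - t) / 2 := by simp [hm]; ring
      have e2 : (m:ℝ) - (t:ℝ) = ((s:ℝ) - t) / 2 := by simp [hm]; ring
      have h1 := ih s m
      have h2 := ih m t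
      rw [e1] at h1; rw [e2] at h2
      have habs : |((s:ℝ) - t) / 2| = |(s:ℝ) - t| / 2 := by
        rw [abs_div]; norm_num
      rw [habs] at h1 h2
      have hdiv : (|(s:ℝ) - t| / 2) ^ β = |(s:ℝ) - t| ^ β / (2:ℝ) ^ β := by
        rw [Real.div_rpow (abs_nonneg _) (by norm_num)]
      have h2β : (2:ℝ) ^ (1 - β) = 2 / (2:ℝ) ^ β := by
        rw [Real.rpow_sub two_pos, Real.rpow_one]
      have hfin : |f s - f t| ≤ |f s - f m| + |f m - f t| := abs_sub_le _ _ _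
      have h2βpos : (0:ℝ) < (2:ℝ) ^ β := Real.rpow_pos_of_pos two_pos _
      calc |f s - f t| ≤ |f s - f m| + |f m - f t| := hfin
        _ ≤ C * (|(s:ℝ) - t| / 2) ^ β * ((2:ℝ) ^ (1 - β)) ^ n
            + C * (|(s:ℝ) - t| / 2) ^ β * ((2:ℝ) ^ (1 - β)) ^ n := add_le_add h1 h2
        _ = C * |(s:ℝ) - t| ^ β * ((2:ℝ) ^ (1 - β)) ^ (n + 1) := by
            rw [hdiv, pow_succ, h2β]; field_simp; ring
  have htend : Filter.Tendsto (fun n : ℕ => C * |(s:ℝ) - t| ^ β * ((2:ℝ) ^ (1 - β)) ^ n)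
      Filter.atTop (nhds 0) := by
    simpa using (tendsto_pow_atTop_nhds_zero_of_lt_one hq0.le hq1).const_mul
      (C * |(s:ℝ) - t| ^ β)
  have := ge_of_tendsto htend (Filter.Eventually.of_forall fun n => key n s t)
  have : |f s - f t| ≤ 0 := this
  have := abs_nonpos_iff.mp this
  linarith [sub_eq_zero.mp this, (sub_eq_zero.mp this)]

lemma cost_lb {X : Type*} [MetricSpace X] [CompactSpace X] [MeasurableSpace X] [BorelSpace X]
    (hX : ∀ x y z : X, dist x z ≤ max (dist x y) (dist y z))
    (p r : ℝ) (hp : 0 < p) (hr : 0 < r) (x : X)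
    (μ ν : Measure X) (π : Measure (X × X)) (hπ : IsCoupling π μ ν) :
    r ^ p * ((μ (Metric.closedBall x r)).toReal - (ν (Metric.closedBall x r)).toReal)
      ≤ ∫ ab, dist ab.1 ab.2 ^ p ∂π := by
  obtain ⟨hprob, hfst, hsnd⟩ := hπ
  haveI := hprob
  set A := Metric.closedBall x r with hA
  have hAm : MeasurableSet A := Metric.isClosed_closedBall.measurableSet
  set E : Set (X × X) := A ×ˢ Aᶜ with hE
  have hEm : MeasurableSet E := hAm.prod hAm.compl
  -- separation: on E, dist ≥ r
  have hsep : ∀ ab ∈ E, r ≤ dist ab.1 ab.2 := by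
    rintro ⟨a, b⟩ ⟨ha, hb⟩
    by_contra hlt
    push_neg at hlt
    apply hb
    have h1 : dist x b ≤ max (dist x a) (dist a b) := hX x a b
    have : dist x b ≤ r := h1.trans (max_le (Metric.mem_closedBall'.mp ha) hlt.le)
    exact Metric.mem_closedBall'.mp (by simpa [dist_comm] using this)
  -- integrability
  have hcont : Continuous fun ab : X × X => dist ab.1 ab.2 ^ p :=
    continuous_dist.rpow_const fun _ => Or.inr hp.le
  have hint : Integrable (fun ab : X × X => dist ab.1 ab.2 ^ p) π := by
    rw [← integrableOn_univ]
    exact hcont.continuousOn.integrableOn_compact isCompact_univ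
  have hnn : ∀ ab : X × X, 0 ≤ dist ab.1 ab.2 ^ p := fun ab =>
    Real.rpow_nonneg dist_nonneg _
  -- measure of E
  have hμA : π (A ×ˢ (Set.univ : Set X)) = μ A := by
    rw [← hfst, Measure.map_apply measurable_fst hAm]
    congr 1
    ext ab; simp
  have hνA : π ((Set.univ : Set X) ×ˢ A) = ν A := by
    rw [← hsnd, Measure.map_apply measurable_snd hAm]
    congr 1
    ext ab; simp
  have hdisj : Disjoint (A ×ˢ A) E := by
    rw [Set.disjoint_left]
    rintro ⟨a, b⟩ ⟨-, h1⟩ ⟨-, h2⟩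
    exact h2 h1
  have hsplit : π (A ×ˢ (Set.univ : Set X)) = π (A ×ˢ A) + π E := by
    rw [← measure_union hdisj hEm]
    congr 1; ext ab; by_cases h : ab.2 ∈ A <;> simp [hE, h]
  have hAA : π (A ×ˢ A) ≤ π ((Set.univ : Set X) ×ˢ A) := by
    apply measure_mono
    rintro ⟨a, b⟩ ⟨h1, h2⟩
    exact ⟨trivial, h2⟩
  have hfinE : π E ≠ ⊤ := measure_ne_top _ _
  have hμν : (μ A).toReal - (ν A).toReal ≤ (π E).toReal := by
    rw [← hμA, ← hνA]
    have h1 : π (A ×ˢ (Set.univ : Set X)) ≤ π ((Set.univ : Set X) ×ˢ A) + π E := by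
      rw [hsplit]; exact add_le_add_left hAA _
    have h2 := ENNReal.toReal_mono
      (ENNReal.add_ne_top.mpr ⟨measure_ne_top _ _, hfinE⟩) h1
    rw [ENNReal.toReal_add (measure_ne_top _ _) hfinE] at h2
    linarith
  -- integral bound
  have hEint : r ^ p * (π E).toReal ≤ ∫ ab in E, dist ab.1 ab.2 ^ p ∂π := by
    have h1 : ∫ _ab in E, r ^ p ∂π = (π E).toReal * r ^ p := by
      simp [integral_const, Measure.restrict_apply_univ, measureReal_def]
    calc r ^ p * (π E).toReal = ∫ _ab in E, r ^ p ∂π := by rw [h1]; ring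
      _ ≤ ∫ ab in E, dist ab.1 ab.2 ^ p ∂π := by
          apply setIntegral_mono_on (integrableOn_const hfinE)
            (hint.integrableOn) hEm
          intro ab hab
          exact Real.rpow_le_rpow hr.le (hsep ab hab) hp.le
  have hfull : ∫ ab in E, dist ab.1 ab.2 ^ p ∂π ≤ ∫ ab, dist ab.1 ab.2 ^ p ∂π :=
    setIntegral_le_integral hint (Filter.Eventually.of_forall hnn)
  have hrp : (0:ℝ) ≤ r ^ p := (Real.rpow_pos_of_pos hr p).le
  calc r ^ p * ((μ A).toReal - (ν A).toReal) ≤ r ^ p * (π E).toReal := by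
        apply mul_le_mul_of_nonneg_left hμν hrp
    _ ≤ _ := hEint.trans hfull

/-- For a compact ultrametric space `X`, `p > 1` and `α ∈ (1/p, 1]`, every `α`-Hölder arc
in `W_p(X)` is constant. -/
theorem wasserstein_ultrametric_holder_arc_constant
    {X : Type*} [MetricSpace X] [CompactSpace X] [MeasurableSpace X] [BorelSpace X]
    (hX : ∀ x y z : X, dist x z ≤ max (dist x y) (dist y z))
    (p : ℝ) (hp : 1 < p) (α : ℝ) (hα₁ : 1 / p < α) (hα₂ : α ≤ 1)
    (γ : unitInterval → ProbabilityMeasure X) (K : ℝ) (hK : 0 ≤ K)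
    (hγ : ∀ s t : unitInterval,
      Wp p ((γ s) : Measure X) ((γ t) : Measure X) ≤ K * |(s : ℝ) - (t : ℝ)| ^ α) :
    ∀ s t : unitInterval, γ s = γ t := by
  intro s t
  have hp0 : (0:ℝ) < p := lt_trans one_pos hp
  have hβ : 1 < α * p := by
    have h := (div_lt_iff₀ hp0).mp hα₁
    linarith
  have hD : ∀ u v : unitInterval,
      sInf {c : ℝ | ∃ π : Measure (X × X),
          IsCoupling π ((γ u) : Measure X) ((γ v) : Measure X) ∧
          c = ∫ ab, dist ab.1 ab.2 ^ p ∂π} ≤ K ^ p * |(u:ℝ) - (v:ℝ)| ^ (α * p) := by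
    intro u v
    have hnn : ∀ c ∈ {c : ℝ | ∃ π : Measure (X × X),
        IsCoupling π ((γ u) : Measure X) ((γ v) : Measure X) ∧
        c = ∫ ab, dist ab.1 ab.2 ^ p ∂π}, (0:ℝ) ≤ c := by
      rintro c ⟨π, hπ, rfl⟩
      exact integral_nonneg fun ab => Real.rpow_nonneg dist_nonneg _
    have h0 : (0:ℝ) ≤ sInf {c : ℝ | ∃ π : Measure (X × X),
        IsCoupling π ((γ u) : Measure X) ((γ v) : Measure X) ∧
        c = ∫ ab, dist ab.1 ab.2 ^ p ∂π} := Real.sInf_nonneg hnn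
    have hEq : sInf {c : ℝ | ∃ π : Measure (X × X),
        IsCoupling π ((γ u) : Measure X) ((γ v) : Measure X) ∧
        c = ∫ ab, dist ab.1 ab.2 ^ p ∂π} = (Wp p ((γ u) : Measure X) ((γ v) : Measure X)) ^ p := by
      rw [Wp, ← Real.rpow_mul h0, one_div, inv_mul_cancel₀ hp0.ne', Real.rpow_one]
    have hWnn : 0 ≤ Wp p ((γ u) : Measure X) ((γ v) : Measure X) := by
      rw [Wp]; exact Real.rpow_nonneg h0 _
    calc sInf {c : ℝ | ∃ π : Measure (X × X),
          IsCoupling π ((γ u) : Measure X) ((γ v) : Measure X) ∧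
          c = ∫ ab, dist ab.1 ab.2 ^ p ∂π}
        = (Wp p ((γ u) : Measure X) ((γ v) : Measure X)) ^ p := hEq
      _ ≤ (K * |(u:ℝ) - (v:ℝ)| ^ α) ^ p := Real.rpow_le_rpow hWnn (hγ u v) hp0.le
      _ = K ^ p * |(u:ℝ) - (v:ℝ)| ^ (α * p) := by
          rw [Real.mul_rpow hK (Real.rpow_nonneg (abs_nonneg _) _),
            ← Real.rpow_mul (abs_nonneg _)]
  have hball : ∀ (x : X) (r : ℝ), 0 < r →
      ((γ s) : Measure X) (Metric.closedBall x r) = ((γ t) : Measure X) (Metric.closedBall x r) := by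
    intro x r hr
    have hrp : (0:ℝ) < r ^ p := Real.rpow_pos_of_pos hr _
    have key : ∀ u v : unitInterval,
        (((γ u) : Measure X) (Metric.closedBall x r)).toReal
          - (((γ v) : Measure X) (Metric.closedBall x r)).toReal
          ≤ (K ^ p / r ^ p) * |(u:ℝ) - (v:ℝ)| ^ (α * p) := by
      intro u v
      have hle : r ^ p * ((((γ u) : Measure X) (Metric.closedBall x r)).toReal
          - (((γ v) : Measure X) (Metric.closedBall x r)).toReal)
          ≤ sInf {c : ℝ | ∃ π : Measure (X × X),
            IsCoupling π ((γ u) : Measure X) ((γ v) : Measure X) ∧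
            c = ∫ ab, dist ab.1 ab.2 ^ p ∂π} := by
        refine le_csInf ⟨∫ ab, dist ab.1 ab.2 ^ p
            ∂((((γ u) : Measure X)).prod (((γ v) : Measure X))),
          ⟨_, prod_isCoupling _ _, rfl⟩⟩ ?_
        rintro c ⟨π, hπ, rfl⟩
        exact cost_lb hX p r hp0 hr x _ _ π hπ
      have h2 := hle.trans (hD u v)
      rw [div_mul_eq_mul_div, le_div_iff₀ hrp]
      linarith
    have hhold : ∀ u v : unitInterval,
        |(((γ u) : Measure X) (Metric.closedBall x r)).toReal
          - (((γ v) : Measure X) (Metric.closedBall x r)).toReal|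
          ≤ (K ^ p / r ^ p) * |(u:ℝ) - (v:ℝ)| ^ (α * p) := by
      intro u v
      rw [abs_sub_le_iff]
      refine ⟨key u v, ?_⟩
      have := key v u
      rwa [abs_sub_comm] at this
    have heq := holder_gt_one_const
      (fun u => (((γ u) : Measure X) (Metric.closedBall x r)).toReal)
      (K ^ p / r ^ p) (α * p) hβ (by positivity) hhold s t
    exact (ENNReal.toReal_eq_toReal_iff' (measure_ne_top _ _) (measure_ne_top _ _)).mp heq
  apply ProbabilityMeasure.toMeasure_injective
  apply MeasureTheory.ext_of_generate_finite _ (ultra_generateFrom hX) (ultra_piSystem hX)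
  · rintro A ⟨x, r, hr, rfl⟩
    exact hball x r hr
  · simp [measure_univ]
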